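/- arXiv:2605.09157 — 2 statements merged into one kernel-verified Lean document; each statement's English description precedes it below -/
import Mathlib

section
/- Let r_max ≥ 0 and let r : ℝ → ℝ be measurable with |r(a)| ≤ r_max for all a ∈ ℝ. Fix μ ∈ ℝ and define g(σ) = ∫ r(a)·φ(a; μ, σ) da for σ > 0. Then g is differentiable on (0, ∞) and for every σ > 0 one has σ·g′(σ) = ∫ r(σ·b + μ)·(b² − 1)·φ(b; 0, 1) db, where the right-hand integral is with respect to Lebesgue measure in b. -/
open MeasureTheory Real
set_option maxHeartbeats 1000000

noncomputable def gpdf (μ σ a : ℝ) : ℝ :=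
  (Real.sqrt (2 * Real.pi * σ ^ 2))⁻¹ * Real.exp (-((a - μ) ^ 2) / (2 * σ ^ 2))

lemma gpdf_eq (μ a : ℝ) {σ : ℝ} (hσ : 0 < σ) :
    gpdf μ σ a = (Real.sqrt (2 * Real.pi))⁻¹ * (σ⁻¹ * Real.exp (-((a - μ) ^ 2) / (2 * σ ^ 2))) := by
  unfold gpdf
  rw [Real.sqrt_mul (by positivity), Real.sqrt_sq hσ.le, mul_inv]
  ring

lemma gpdf_nonneg (μ σ a : ℝ) : 0 ≤ gpdf μ σ a := by
  unfold gpdf; positivity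

lemma measurable_gpdf (μ σ : ℝ) : Measurable (gpdf μ σ) := by
  unfold gpdf; fun_prop

lemma hasDerivAt_gpdf (μ a : ℝ) {σ : ℝ} (hσ : 0 < σ) :
    HasDerivAt (fun s => gpdf μ s a)
      (gpdf μ σ a * (((a - μ) ^ 2 - σ ^ 2) / σ ^ 3)) σ := by
  set c := (a - μ) ^ 2 with hc
  have h1 : HasDerivAt (fun s : ℝ => 2 * s ^ 2) (2 * (2 * σ)) σ := by
    simpa using ((hasDerivAt_pow 2 σ).const_mul 2)
  have h2 : HasDerivAt (fun s : ℝ => -c / (2 * s ^ 2))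
      ((0 * (2 * σ ^ 2) - (-c) * (2 * (2 * σ))) / (2 * σ ^ 2) ^ 2) σ :=
    (hasDerivAt_const σ (-c)).div h1 (by positivity)
  have h3 := h2.exp
  have h4 : HasDerivAt (fun s : ℝ => s⁻¹) (-(σ ^ 2)⁻¹) σ := hasDerivAt_inv hσ.ne'
  have h5 := (h4.mul h3).const_mul (Real.sqrt (2 * Real.pi))⁻¹
  have heq : (fun s => gpdf μ s a) =ᶠ[nhds σ]
      (fun s => (Real.sqrt (2 * Real.pi))⁻¹ * (s⁻¹ * Real.exp (-c / (2 * s ^ 2)))) := by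
    filter_upwards [eventually_gt_nhds hσ] with s hs
    exact gpdf_eq μ a hs
  have h6 := h5.congr_of_eventuallyEq heq
  refine h6.congr_deriv ?_
  rw [gpdf_eq μ a hσ]
  field_simp
  ring

lemma gpdf_scale {σ : ℝ} (hσ : 0 < σ) (μ b : ℝ) :
    gpdf μ σ (σ * b + μ) = σ⁻¹ * gpdf 0 1 b := by
  rw [gpdf_eq μ _ hσ, gpdf_eq 0 b one_pos]
  have : -((σ * b + μ - μ) ^ 2) / (2 * σ ^ 2) = -((b - 0) ^ 2) / (2 * 1 ^ 2) := by
    field_simp; ring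
  rw [this]; ring

lemma integrable_aux {b : ℝ} (hb : 0 < b) (k K : ℝ) :
    Integrable fun x : ℝ => Real.exp (-b * x ^ 2) * ((x ^ 2 + k) / K) := by
  have h1 : Integrable fun x : ℝ => x ^ 2 * Real.exp (-b * x ^ 2) := by
    have h := integrable_rpow_mul_exp_neg_mul_sq hb (by norm_num : (-1 : ℝ) < 2)
    rw [show ((2 : ℝ)) = ((2 : ℕ) : ℝ) by norm_num] at h
    simpa [Real.rpow_natCast] using h
  have h2 := (integrable_exp_neg_mul_sq hb).const_mul k
  apply ((h1.add h2).div_const K).congr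
  filter_upwards with x
  simp
  ring

/-- for bounded measurable `r`, `g(σ) = ∫ r(a) φ(a; μ, σ) da` is
differentiable on `(0, ∞)` and `σ·g′(σ) = ∫ r(σb+μ)(b²−1) φ(b;0,1) db`. -/
theorem stmt0 (r_max : ℝ) (hrmax : 0 ≤ r_max) (r : ℝ → ℝ) (hmeas : Measurable r)
    (hbd : ∀ a, |r a| ≤ r_max) (μ : ℝ) :
    (∀ σ ∈ Set.Ioi (0 : ℝ),
      DifferentiableAt ℝ (fun σ' => ∫ a, r a * gpdf μ σ' a) σ) ∧
    (∀ σ : ℝ, 0 < σ →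
      σ * deriv (fun σ' => ∫ a, r a * gpdf μ σ' a) σ
        = ∫ b, r (σ * b + μ) * (b ^ 2 - 1) * gpdf 0 1 b) := by
  set F' : ℝ → ℝ → ℝ := fun s a => r a * (gpdf μ s a * (((a - μ) ^ 2 - s ^ 2) / s ^ 3)) with hF'
  -- the key derivative fact
  have key : ∀ σ : ℝ, 0 < σ →
      HasDerivAt (fun σ' => ∫ a, r a * gpdf μ σ' a) (∫ a, F' σ a) σ := by
    intro σ₀ hσ₀
    have hball : ∀ s ∈ Metric.ball σ₀ (σ₀ / 2), σ₀ / 2 < s ∧ s < 3 * σ₀ / 2 := by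
      intro s hs
      rw [Metric.mem_ball, Real.dist_eq, abs_lt] at hs
      constructor <;> linarith [hs.1, hs.2]
    have hFmeas : ∀ s : ℝ, AEStronglyMeasurable (fun a => r a * gpdf μ s a) volume :=
      fun s => (hmeas.mul (measurable_gpdf μ s)).aestronglyMeasurable
    have hgint : ∀ s : ℝ, 0 < s → Integrable (gpdf μ s) := by
      intro s hs
      have h := ((integrable_exp_neg_mul_sq
        (show (0:ℝ) < (2 * s ^ 2)⁻¹ by positivity)).comp_sub_right μ).const_mul
        (Real.sqrt (2 * Real.pi * s ^ 2))⁻¹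
      apply h.congr
      filter_upwards with a
      unfold gpdf
      congr 1
      rw [neg_div, neg_mul, ← div_eq_inv_mul]
    have hFint : Integrable (fun a => r a * gpdf μ σ₀ a) volume :=
      (hgint σ₀ hσ₀).bdd_mul hmeas.aestronglyMeasurable
        (Filter.Eventually.of_forall fun a => by rw [Real.norm_eq_abs]; exact hbd a)
    have hF'meas : AEStronglyMeasurable (F' σ₀) volume := by
      apply Measurable.aestronglyMeasurable
      exact hmeas.mul ((measurable_gpdf μ σ₀).mul (by fun_prop))
    set bound : ℝ → ℝ := fun a => r_max * ((Real.sqrt (2 * Real.pi))⁻¹ * ((2 / σ₀) *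
      (Real.exp (-(8 * σ₀ ^ 2)⁻¹ * (a - μ) ^ 2) *
        (((a - μ) ^ 2 + 9 * σ₀ ^ 2 / 4) / (σ₀ ^ 3 / 8))))) with hbound
    have hbound_int : Integrable bound := by
      have h := ((integrable_aux (show (0:ℝ) < (8 * σ₀ ^ 2)⁻¹ by positivity)
        (9 * σ₀ ^ 2 / 4) (σ₀ ^ 3 / 8)).comp_sub_right μ)
      exact (((h.const_mul _).const_mul _).const_mul _)
    have h_bound : ∀ᵐ a : ℝ, ∀ s ∈ Metric.ball σ₀ (σ₀ / 2), ‖F' s a‖ ≤ bound a := by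
      refine Filter.Eventually.of_forall fun a => fun s hs => ?_
      obtain ⟨hs1, hs2⟩ := hball s hs
      have hs0 : 0 < s := lt_trans (by positivity) hs1
      set c := (a - μ) ^ 2 with hc
      have hc0 : 0 ≤ c := sq_nonneg _
      rw [hF']
      rw [Real.norm_eq_abs, abs_mul, abs_mul]
      rw [abs_of_nonneg (gpdf_nonneg μ s a), gpdf_eq μ a hs0]
      -- estimates
      have e1 : |r a| ≤ r_max := hbd a
      have e2 : s⁻¹ ≤ 2 / σ₀ := by
        rw [div_eq_mul_inv, show (2:ℝ) * σ₀⁻¹ = (σ₀ / 2)⁻¹ by field_simp]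
        exact inv_anti₀ (by positivity) hs1.le
      have e3 : Real.exp (-c / (2 * s ^ 2)) ≤ Real.exp (-(8 * σ₀ ^ 2)⁻¹ * c) := by
        apply Real.exp_le_exp.mpr
        have h4 : 2 * s ^ 2 ≤ 8 * σ₀ ^ 2 := by nlinarith
        rw [show -(8 * σ₀ ^ 2)⁻¹ * c = -c / (8 * σ₀ ^ 2) by ring,
          div_le_div_iff₀ (by positivity) (by positivity)]
        nlinarith [mul_le_mul_of_nonneg_left h4 hc0]
      have e4 : |(c - s ^ 2) / s ^ 3| ≤ (c + 9 * σ₀ ^ 2 / 4) / (σ₀ ^ 3 / 8) := by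
        rw [abs_div, abs_of_pos (by positivity : (0:ℝ) < s ^ 3)]
        refine div_le_div₀ (by positivity) ?_ (by positivity) ?_
        · rw [abs_le]; constructor <;> nlinarith
        · calc σ₀ ^ 3 / 8 = (σ₀ / 2) ^ 3 := by ring
          _ ≤ s ^ 3 := pow_le_pow_left₀ (by positivity) hs1.le 3
      have A : (Real.sqrt (2 * Real.pi))⁻¹ * (s⁻¹ * Real.exp (-c / (2 * s ^ 2)))
          ≤ (Real.sqrt (2 * Real.pi))⁻¹ * ((2 / σ₀) * Real.exp (-(8 * σ₀ ^ 2)⁻¹ * c)) :=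
        mul_le_mul_of_nonneg_left
          (mul_le_mul e2 e3 (Real.exp_pos _).le (by positivity)) (by positivity)
      calc |r a| * ((Real.sqrt (2 * Real.pi))⁻¹ * (s⁻¹ * Real.exp (-c / (2 * s ^ 2))) *
            |(c - s ^ 2) / s ^ 3|)
          ≤ r_max * ((Real.sqrt (2 * Real.pi))⁻¹ * ((2 / σ₀) * Real.exp (-(8 * σ₀ ^ 2)⁻¹ * c)) *
            ((c + 9 * σ₀ ^ 2 / 4) / (σ₀ ^ 3 / 8))) :=
            mul_le_mul e1 (mul_le_mul A e4 (abs_nonneg _) (by positivity))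
              (mul_nonneg (by positivity) (abs_nonneg _)) hrmax
          _ = bound a := by rw [hbound]; ring
    have h_diff : ∀ᵐ a : ℝ, ∀ s ∈ Metric.ball σ₀ (σ₀ / 2),
        HasDerivAt (fun s' => r a * gpdf μ s' a) (F' s a) s := by
      refine Filter.Eventually.of_forall fun a => fun s hs => ?_
      have hs0 : 0 < s := lt_trans (by positivity) (hball s hs).1
      exact (hasDerivAt_gpdf μ a hs0).const_mul (r a)
    exact (hasDerivAt_integral_of_dominated_loc_of_deriv_le (Metric.ball_mem_nhds σ₀ (by positivity : (0:ℝ) < σ₀ / 2))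
      (Filter.Eventually.of_forall hFmeas) hFint hF'meas h_bound hbound_int h_diff).2
  constructor
  · intro σ hσ
    exact (key σ (Set.mem_Ioi.mp hσ)).differentiableAt
  · intro σ hσ
    rw [(key σ hσ).deriv]
    have hpoint : ∀ b : ℝ, r (σ * b + μ) * (b ^ 2 - 1) * gpdf 0 1 b
        = σ ^ 2 * F' σ (σ * b + μ) := by
      intro b
      rw [hF']
      simp only [gpdf_scale hσ μ b, add_sub_cancel_right]
      have h1 : ((σ * b) ^ 2 - σ ^ 2) / σ ^ 3 = (b ^ 2 - 1) / σ := by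
        field_simp
      rw [h1]
      field_simp
    rw [show (∫ b, r (σ * b + μ) * (b ^ 2 - 1) * gpdf 0 1 b)
        = ∫ b, σ ^ 2 * F' σ (σ * b + μ) from integral_congr_ae
          (Filter.Eventually.of_forall hpoint)]
    rw [integral_const_mul]
    have hcomp : (∫ b : ℝ, F' σ (σ * b + μ)) = σ⁻¹ * ∫ a, F' σ a := by
      have h1 : (∫ b : ℝ, F' σ (σ * b + μ))
          = ∫ b : ℝ, (fun y => F' σ (y + μ)) (σ * b) := by rfl
      rw [h1, MeasureTheory.Measure.integral_comp_mul_left (fun y => F' σ (y + μ)) σ]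
      rw [MeasureTheory.integral_add_right_eq_self (F' σ) μ]
      rw [abs_of_pos (inv_pos.mpr hσ), smul_eq_mul]
    rw [hcomp]
    field_simp
end

section
/- Let r : ℝ → ℝ be bounded and measurable, let α ≥ 0, and let N ≥ 1. If the Gaussian objective J^b_α has at least one stationary point, then the N-component mixture objective J^m_α also has at least one stationary point, and sup{ J^m_α(θ) : θ a stationary point of J^m_α } ≥ sup{ J^b_α(μ, σ) : (μ, σ) a stationary point of J^b_α }, the suprema being taken in the extended real numbers. -/
open MeasureTheory Real

/-- Entropy-regularized bandit objective under the Gaussian parameterization: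
`J^b_α(μ, σ) = ∫ (r(a) − α·log φ(a; μ, σ)) · φ(a; μ, σ) da`. -/
noncomputable def Jb (r : ℝ → ℝ) (α μ σ : ℝ) : ℝ :=
  ∫ a, (r a - α * Real.log (gpdf μ σ a)) * gpdf μ σ a

/-- Softmax weights `w_k = exp(η_k) / Σ_j exp(η_j)`. -/
noncomputable def softmaxW {N : ℕ} (η : Fin N → ℝ) (k : Fin N) : ℝ :=
  Real.exp (η k) / ∑ j, Real.exp (η j)

/-- Mixture density with softmax weights:
`m(a) = Σ_k w_k · φ(a; μ_k, σ_k)`. -/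
noncomputable def mixDensity {N : ℕ} (μs σs η : Fin N → ℝ) (a : ℝ) : ℝ :=
  ∑ k, softmaxW η k * gpdf (μs k) (σs k) a

/-- Entropy-regularized bandit objective under the `N`-component mixture
parameterization. -/
noncomputable def Jm (r : ℝ → ℝ) (α : ℝ) {N : ℕ} (μs σs η : Fin N → ℝ) : ℝ :=
  ∫ a, (r a - α * Real.log (mixDensity μs σs η a)) * mixDensity μs σs η a

/-- `(μ, σ)` (with `σ > 0`) is a stationary point of `J^b_α`: both partial
derivatives exist and vanish. -/
def IsStatB (r : ℝ → ℝ) (α μ σ : ℝ) : Prop :=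
  0 < σ ∧
  (DifferentiableAt ℝ (fun x => Jb r α x σ) μ ∧ deriv (fun x => Jb r α x σ) μ = 0) ∧
  (DifferentiableAt ℝ (fun x => Jb r α μ x) σ ∧ deriv (fun x => Jb r α μ x) σ = 0)

/-- `(μs, σs, η)` (with all `σs k > 0`) is a stationary point of `J^m_α`: all
`3N` partial derivatives exist and vanish. -/
def IsStatM (r : ℝ → ℝ) (α : ℝ) {N : ℕ} (μs σs η : Fin N → ℝ) : Prop :=
  (∀ k, 0 < σs k) ∧
  ∀ k : Fin N,
    (DifferentiableAt ℝ (fun x => Jm r α (Function.update μs k x) σs η) (μs k) ∧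
      deriv (fun x => Jm r α (Function.update μs k x) σs η) (μs k) = 0) ∧
    (DifferentiableAt ℝ (fun x => Jm r α μs (Function.update σs k x) η) (σs k) ∧
      deriv (fun x => Jm r α μs (Function.update σs k x) η) (σs k) = 0) ∧
    (DifferentiableAt ℝ (fun x => Jm r α μs σs (Function.update η k x)) (η k) ∧
      deriv (fun x => Jm r α μs σs (Function.update η k x)) (η k) = 0)

lemma sqrt2pi_pos (σ : ℝ) (hσ : 0 < σ) : 0 < Real.sqrt (2 * Real.pi * σ ^ 2) :=
  Real.sqrt_pos.mpr (by positivity)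

lemma gpdf_pos {μ σ : ℝ} (hσ : 0 < σ) (a : ℝ) : 0 < gpdf μ σ a :=
  mul_pos (inv_pos.mpr (sqrt2pi_pos σ hσ)) (Real.exp_pos _)

lemma gpdf_le {μ σ : ℝ} (hσ : 0 < σ) (a : ℝ) :
    gpdf μ σ a ≤ (Real.sqrt (2 * Real.pi * σ ^ 2))⁻¹ := by
  have h1 : Real.exp (-((a - μ) ^ 2) / (2 * σ ^ 2)) ≤ 1 := by
    rw [Real.exp_le_one_iff]
    have h2 : (0:ℝ) < 2 * σ ^ 2 := by positivity
    apply div_nonpos_of_nonpos_of_nonneg (neg_nonpos.mpr (sq_nonneg _)) h2.le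
  calc gpdf μ σ a ≤ (Real.sqrt (2 * Real.pi * σ ^ 2))⁻¹ * 1 := by
        exact mul_le_mul_of_nonneg_left h1 (by positivity)
    _ = _ := mul_one _

lemma log_gpdf {μ σ : ℝ} (hσ : 0 < σ) (a : ℝ) :
    Real.log (gpdf μ σ a) = -Real.log (Real.sqrt (2 * Real.pi * σ ^ 2)) - (a - μ) ^ 2 / (2 * σ ^ 2) := by
  rw [gpdf, Real.log_mul (by positivity) (Real.exp_ne_zero _), Real.log_inv, Real.log_exp]
  ring

lemma exp_ge_linear (x : ℝ) : x ≤ Real.exp x := by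
  have := Real.add_one_le_exp x; linarith

lemma exp_ge_quarter_sq {x : ℝ} (hx : 0 ≤ x) : x ^ 2 / 4 ≤ Real.exp x := by
  have h : Real.exp x = Real.exp (x/2) ^ 2 := by
    rw [← Real.exp_nat_mul]; norm_num; ring_nf
  have h2 : x / 2 ≤ Real.exp (x/2) := exp_ge_linear _
  have h3 : (x/2)^2 ≤ Real.exp (x/2) ^ 2 := by
    apply sq_le_sq' <;> nlinarith [Real.exp_pos (x/2)]
  rw [h]; nlinarith

lemma integrable_quartic_gauss {b : ℝ} (hb : 0 < b) (c0 c1 c2 t : ℝ) :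
    Integrable (fun a : ℝ =>
      (c0 + c1 * (a - t) ^ 2 + c2 * (a - t) ^ 4) * Real.exp (-b * (a - t) ^ 2)) := by
  set K : ℝ := |c0| + |c1| * (2 / b) + |c2| * (16 / b ^ 2) with hK
  have hint : Integrable (fun a : ℝ => K * Real.exp (-(b/2) * (a - t) ^ 2)) := by
    exact ((integrable_exp_neg_mul_sq (half_pos hb)).comp_sub_right t).const_mul K
  refine hint.mono' ?_ ?_
  · exact (by fun_prop : Measurable fun a : ℝ =>
      (c0 + c1 * (a - t) ^ 2 + c2 * (a - t) ^ 4) * Real.exp (-b * (a - t) ^ 2)).aestronglyMeasurable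
  · refine Filter.Eventually.of_forall fun a => ?_
    set u := a - t
    have hE : (0:ℝ) < Real.exp (-(b/2) * u ^ 2) := Real.exp_pos _
    have hsplit : Real.exp (-b * u ^ 2)
        = Real.exp (-(b/2) * u ^ 2) * Real.exp (-(b/2) * u ^ 2) := by
      rw [← Real.exp_add]; ring_nf
    have hprod : Real.exp (-(b/2) * u ^ 2) * Real.exp ((b/2) * u ^ 2) = 1 := by
      rw [← Real.exp_add]; ring_nf; exact Real.exp_zero
    have h1 : u ^ 2 * Real.exp (-(b/2) * u ^ 2) ≤ 2 / b := by
      have := exp_ge_linear ((b/2) * u ^ 2)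
      have h' : u ^ 2 ≤ (2 / b) * Real.exp ((b/2) * u ^ 2) := by
        rw [div_mul_eq_mul_div, le_div_iff₀ hb]; nlinarith
      calc u ^ 2 * Real.exp (-(b/2) * u ^ 2)
          ≤ ((2 / b) * Real.exp ((b/2) * u ^ 2)) * Real.exp (-(b/2) * u ^ 2) :=
            mul_le_mul_of_nonneg_right h' hE.le
        _ = 2 / b := by rw [mul_assoc, mul_comm (Real.exp _), hprod, mul_one]
    have h2 : u ^ 4 * Real.exp (-(b/2) * u ^ 2) ≤ 16 / b ^ 2 := by
      have hq := exp_ge_quarter_sq (x := (b/2) * u ^ 2) (by positivity)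
      have h' : u ^ 4 ≤ (16 / b ^ 2) * Real.exp ((b/2) * u ^ 2) := by
        rw [div_mul_eq_mul_div, le_div_iff₀ (by positivity : (0:ℝ) < b ^ 2)]; nlinarith
      calc u ^ 4 * Real.exp (-(b/2) * u ^ 2)
          ≤ ((16 / b ^ 2) * Real.exp ((b/2) * u ^ 2)) * Real.exp (-(b/2) * u ^ 2) :=
            mul_le_mul_of_nonneg_right h' hE.le
        _ = 16 / b ^ 2 := by rw [mul_assoc, mul_comm (Real.exp _), hprod, mul_one]
    have hu2 : (0:ℝ) ≤ u ^ 2 := sq_nonneg u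
    have hu4 : (0:ℝ) ≤ u ^ 4 := by positivity
    have hle1 : Real.exp (-(b/2) * u ^ 2) ≤ 1 := by
      rw [Real.exp_le_one_iff]; nlinarith
    have habs : |(c0 + c1 * u ^ 2 + c2 * u ^ 4) * Real.exp (-b * u ^ 2)|
        ≤ (|c0| + |c1| * u ^ 2 + |c2| * u ^ 4) * Real.exp (-b * u ^ 2) := by
      rw [abs_mul, abs_of_pos (Real.exp_pos _)]
      apply mul_le_mul_of_nonneg_right _ (Real.exp_pos _).le
      calc |c0 + c1 * u ^ 2 + c2 * u ^ 4| ≤ |c0 + c1 * u ^ 2| + |c2 * u ^ 4| := abs_add_le _ _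
        _ ≤ |c0| + |c1 * u ^ 2| + |c2 * u ^ 4| := by
            have := abs_add_le c0 (c1 * u ^ 2); linarith
        _ = |c0| + |c1| * u ^ 2 + |c2| * u ^ 4 := by
            rw [abs_mul, abs_mul, abs_of_nonneg hu2, abs_of_nonneg hu4]
    have hfin : (|c0| + |c1| * u ^ 2 + |c2| * u ^ 4) * Real.exp (-b * u ^ 2)
        ≤ K * Real.exp (-(b/2) * u ^ 2) := by
      rw [hsplit, hK]
      have t1 := mul_le_mul_of_nonneg_right
        (mul_le_mul_of_nonneg_left h1 (abs_nonneg c1)) hE.le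
      have t2 := mul_le_mul_of_nonneg_right
        (mul_le_mul_of_nonneg_left h2 (abs_nonneg c2)) hE.le
      have t0 : |c0| * (Real.exp (-(b/2) * u ^ 2) * Real.exp (-(b/2) * u ^ 2))
          ≤ |c0| * Real.exp (-(b/2) * u ^ 2) := by
        apply mul_le_mul_of_nonneg_left _ (abs_nonneg c0)
        nlinarith
      nlinarith [t0, t1, t2]
    have : ‖(c0 + c1 * u ^ 2 + c2 * u ^ 4) * Real.exp (-b * u ^ 2)‖
        ≤ K * Real.exp (-(b/2) * u ^ 2) := by
      rw [Real.norm_eq_abs]; exact le_trans habs hfin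
    exact this

lemma gpdf_eq_exp {μ σ : ℝ} (hσ : 0 < σ) (a : ℝ) :
    gpdf μ σ a = (Real.sqrt (2 * Real.pi * σ ^ 2))⁻¹
      * Real.exp (-(1 / (2 * σ ^ 2)) * (a - μ) ^ 2) := by
  unfold gpdf; congr 1; congr 1; field_simp

lemma integrable_F0 (r : ℝ → ℝ) (hmeas : Measurable r) (C : ℝ) (hbd : ∀ a, |r a| ≤ C)
    (α μ σ : ℝ) (hσ : 0 < σ) :
    Integrable (fun a => (r a - α * Real.log (gpdf μ σ a)) * gpdf μ σ a) := by
  set S := Real.sqrt (2 * Real.pi * σ ^ 2) with hS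
  have hSpos : 0 < S := sqrt2pi_pos σ hσ
  set b : ℝ := 1 / (2 * σ ^ 2) with hb
  have hbpos : 0 < b := by positivity
  set c0 : ℝ := (C + |α| * |Real.log S|) * S⁻¹ with hc0
  set c1 : ℝ := (|α| * b) * S⁻¹ with hc1
  have hint := integrable_quartic_gauss hbpos c0 c1 0 μ
  refine Integrable.mono' hint ?_ (Filter.Eventually.of_forall fun a => ?_)
  · exact ((hmeas.sub ((Real.measurable_log.comp (measurable_gpdf μ σ)).const_mul α)).mul
      (measurable_gpdf μ σ)).aestronglyMeasurable
  · have hg := gpdf_pos hσ (μ := μ) (σ := σ) a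
    have hgl := log_gpdf hσ (μ := μ) (σ := σ) a
    rw [Real.norm_eq_abs, abs_mul, abs_of_pos hg]
    have hlog : |Real.log (gpdf μ σ a)| ≤ |Real.log S| + b * (a - μ) ^ 2 := by
      rw [hgl]
      have h1 := abs_sub (-Real.log S) ((a - μ) ^ 2 / (2 * σ ^ 2))
      have h2 : |(a - μ) ^ 2 / (2 * σ ^ 2)| = b * (a - μ) ^ 2 := by
        rw [abs_div, abs_of_nonneg (sq_nonneg _),
          abs_of_pos (by positivity : (0:ℝ) < 2 * σ ^ 2), hb]; ring
      rw [h2] at h1; simpa [abs_neg] using h1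
    have h1 : |r a - α * Real.log (gpdf μ σ a)| ≤ C + |α| * (|Real.log S| + b * (a - μ) ^ 2) := by
      have h3 := abs_sub (r a) (α * Real.log (gpdf μ σ a))
      rw [abs_mul] at h3
      have h4 := mul_le_mul_of_nonneg_left hlog (abs_nonneg α)
      have h5 := hbd a
      linarith
    have hgev : gpdf μ σ a = S⁻¹ * Real.exp (-b * (a - μ) ^ 2) := by
      rw [gpdf_eq_exp hσ, hb, hS]
    calc |r a - α * Real.log (gpdf μ σ a)| * gpdf μ σ a
        ≤ (C + |α| * (|Real.log S| + b * (a - μ) ^ 2)) * gpdf μ σ a :=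
          mul_le_mul_of_nonneg_right h1 hg.le
      _ = (c0 + c1 * (a - μ) ^ 2 + 0 * (a - μ) ^ 4) * Real.exp (-b * (a - μ) ^ 2) := by
          rw [hgev, hc0, hc1]; ring

lemma hasDerivAt_Jgen
    (r : ℝ → ℝ) (hmeas : Measurable r) (C : ℝ) (hbd : ∀ a, |r a| ≤ C)
    (α : ℝ) (hα : 0 ≤ α) (μ0 σ0 : ℝ) (hσ0 : 0 < σ0)
    (w : ℝ) (hw0 : 0 < w) (hw1 : w ≤ 1)
    (x₀ : ℝ) (p p' : ℝ → ℝ → ℝ) (ε : ℝ) (hε : 0 < ε)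
    (hp0 : ∀ a, p x₀ a = gpdf μ0 σ0 a)
    (hpmeas : ∀ x, Measurable (p x))
    (hp'meas : Measurable (p' x₀))
    (hppos : ∀ x ∈ Metric.ball x₀ ε, ∀ a, 0 < p x a)
    (Mp : ℝ)
    (hub : ∀ x ∈ Metric.ball x₀ ε, ∀ a, p x a ≤ Mp)
    (c1 c2 : ℝ) (hc2 : 0 ≤ c2)
    (hlb : ∀ x ∈ Metric.ball x₀ ε, ∀ a, Real.exp (-(c1 + c2 * a ^ 2)) ≤ p x a)
    (b k0 k1 : ℝ) (hb : 0 < b) (hk0 : 0 ≤ k0) (hk1 : 0 ≤ k1) (t : ℝ)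
    (hub' : ∀ x ∈ Metric.ball x₀ ε, ∀ a,
      |p' x a| ≤ (k0 + k1 * (a - t) ^ 2) * Real.exp (-b * (a - t) ^ 2))
    (hderiv : ∀ a, ∀ x ∈ Metric.ball x₀ ε, HasDerivAt (fun y => p y a) (p' x a) x) :
    HasDerivAt (fun x => ∫ a, (r a - α * Real.log (w * p x a + (1 - w) * gpdf μ0 σ0 a))
        * (w * p x a + (1 - w) * gpdf μ0 σ0 a))
      (w * ∫ a, (r a - α - α * Real.log (gpdf μ0 σ0 a)) * p' x₀ a) x₀ := by
  have hC : 0 ≤ C := le_trans (abs_nonneg _) (hbd 0)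
  set φ := gpdf μ0 σ0 with hφ
  have hφpos : ∀ a, 0 < φ a := gpdf_pos hσ0
  set Mφ : ℝ := (Real.sqrt (2 * Real.pi * σ0 ^ 2))⁻¹ with hMφ
  have hMφpos : 0 < Mφ := inv_pos.mpr (sqrt2pi_pos σ0 hσ0)
  have hφle : ∀ a, φ a ≤ Mφ := gpdf_le hσ0
  set m : ℝ → ℝ → ℝ := fun x a => w * p x a + (1 - w) * φ a with hm
  have hMp : 0 < Mp := lt_of_lt_of_le (hppos x₀ (Metric.mem_ball_self hε) 0)
    (hub x₀ (Metric.mem_ball_self hε) 0)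
  have hmpos : ∀ x ∈ Metric.ball x₀ ε, ∀ a, 0 < m x a := by
    intro x hx a
    have := hppos x hx a
    have := hφpos a
    have : 0 ≤ (1 - w) * φ a := mul_nonneg (by linarith) (hφpos a).le
    have := mul_pos hw0 (hppos x hx a)
    simp only [hm]; linarith
  have hmle : ∀ x ∈ Metric.ball x₀ ε, ∀ a, m x a ≤ Mp + Mφ := by
    intro x hx a
    have h1 : w * p x a ≤ Mp := by
      calc w * p x a ≤ 1 * p x a :=
            mul_le_mul_of_nonneg_right hw1 (hppos x hx a).le
        _ = p x a := one_mul _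
        _ ≤ Mp := hub x hx a
    have h2 : (1 - w) * φ a ≤ Mφ := by
      calc (1 - w) * φ a ≤ 1 * φ a :=
            mul_le_mul_of_nonneg_right (by linarith) (hφpos a).le
        _ = φ a := one_mul _
        _ ≤ Mφ := hφle a
    simp only [hm]; linarith
  set L1 : ℝ := Mp + Mφ + |Real.log w| + |c1| with hL1
  have hL1nn : 0 ≤ L1 := by positivity
  have hlogm : ∀ x ∈ Metric.ball x₀ ε, ∀ a, |Real.log (m x a)| ≤ L1 + c2 * a ^ 2 := by
    intro x hx a
    have hpos := hmpos x hx a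
    rw [abs_le]
    constructor
    · have h : Real.exp (Real.log w - (c1 + c2 * a ^ 2)) ≤ m x a := by
        have h1 : Real.exp (Real.log w - (c1 + c2 * a ^ 2))
            = w * Real.exp (-(c1 + c2 * a ^ 2)) := by
          rw [Real.exp_sub, Real.exp_log hw0, Real.exp_neg, div_eq_mul_inv]
        rw [h1]
        have h2 := mul_le_mul_of_nonneg_left (hlb x hx a) hw0.le
        have h3 : 0 ≤ (1 - w) * φ a := mul_nonneg (by linarith) (hφpos a).le
        simp only [hm]; linarith
      have := Real.log_le_log (Real.exp_pos _) h
      rw [Real.log_exp] at this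
      have habs1 : -|Real.log w| ≤ Real.log w := neg_abs_le _
      have habs2 : c1 ≤ |c1| := le_abs_self _
      linarith
    · have h4 := Real.log_le_log hpos (hmle x hx a)
      have h5 : Real.log (Mp + Mφ) ≤ Mp + Mφ := by
        have := Real.log_le_sub_one_of_pos (by linarith : (0:ℝ) < Mp + Mφ)
        linarith
      nlinarith [abs_nonneg (Real.log w), abs_nonneg c1, mul_nonneg hc2 (sq_nonneg a)]
  -- the four data for DCT
  set F : ℝ → ℝ → ℝ := fun x a => (r a - α * Real.log (m x a)) * m x a with hF
  set F' : ℝ → ℝ → ℝ := fun x a => (r a - α - α * Real.log (m x a)) * (w * p' x a) with hF'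
  have hmmeas : ∀ x, Measurable (fun a => m x a) := fun x =>
    ((hpmeas x).const_mul w).add ((measurable_gpdf μ0 σ0).const_mul (1 - w))
  have hFmeas : ∀ x, Measurable (F x) := fun x =>
    (hmeas.sub ((Real.measurable_log.comp (hmmeas x)).const_mul α)).mul (hmmeas x)
  have hm0 : ∀ a, m x₀ a = φ a := by
    intro a; simp only [hm, hp0 a, hφ]; ring
  have hFint : Integrable (F x₀) := by
    have : F x₀ = fun a => (r a - α * Real.log (gpdf μ0 σ0 a)) * gpdf μ0 σ0 a :=
      funext fun a => by rw [hF]; simp only [hm0 a, hφ]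
    rw [this]
    exact integrable_F0 r hmeas C hbd α μ0 σ0 hσ0
  have hF'meas : AEStronglyMeasurable (F' x₀) volume := by
    refine Measurable.aestronglyMeasurable ?_
    exact ((hmeas.sub_const α).sub ((Real.measurable_log.comp (hmmeas x₀)).const_mul α)).mul
      (hp'meas.const_mul w)
  set L : ℝ := C + α + α * L1 with hLdef
  have hL : 0 ≤ L := by positivity
  set B : ℝ := α * c2 with hB
  have hBnn : 0 ≤ B := mul_nonneg hα hc2
  set A : ℝ := L + 2 * B * t ^ 2 with hA
  have hAnn : 0 ≤ A := by positivity
  set bound : ℝ → ℝ := fun a =>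
    (A * k0 + (A * k1 + 2 * B * k0) * (a - t) ^ 2 + (2 * B * k1) * (a - t) ^ 4)
      * Real.exp (-b * (a - t) ^ 2) with hbound
  have hboundint : Integrable bound := integrable_quartic_gauss hb _ _ _ t
  have h_bound : ∀ᵐ a, ∀ x ∈ Metric.ball x₀ ε, ‖F' x a‖ ≤ bound a := by
    refine Filter.Eventually.of_forall fun a => fun x hx => ?_
    have hlm := hlogm x hx a
    have hp' := hub' x hx a
    have hfac : |r a - α - α * Real.log (m x a)| ≤ L + B * a ^ 2 := by
      have h1 := abs_sub (r a - α) (α * Real.log (m x a))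
      have h2 : |r a - α| ≤ C + α := by
        have h2a := abs_sub (r a) α
        rw [abs_of_nonneg hα] at h2a
        linarith [hbd a]
      rw [abs_mul, abs_of_nonneg hα] at h1
      have h3 := mul_le_mul_of_nonneg_left hlm hα
      have h3' : α * (L1 + c2 * a ^ 2) = α * L1 + α * c2 * a ^ 2 := by ring
      rw [hLdef, hB]; linarith
    have hwp' : |w * p' x a| ≤ (k0 + k1 * (a - t) ^ 2) * Real.exp (-b * (a - t) ^ 2) := by
      rw [abs_mul, abs_of_pos hw0]
      calc w * |p' x a| ≤ 1 * |p' x a| :=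
            mul_le_mul_of_nonneg_right hw1 (abs_nonneg _)
        _ = |p' x a| := one_mul _
        _ ≤ _ := hp'
    have hfac2 : L + B * a ^ 2 ≤ A + 2 * B * (a - t) ^ 2 := by
      rw [hA]; nlinarith [mul_nonneg hBnn (sq_nonneg (a - 2 * t))]
    rw [Real.norm_eq_abs, hF', abs_mul]
    have hnn1 : (0:ℝ) ≤ (k0 + k1 * (a - t) ^ 2) * Real.exp (-b * (a - t) ^ 2) := by positivity
    calc |r a - α - α * Real.log (m x a)| * |w * p' x a|
        ≤ (L + B * a ^ 2) * ((k0 + k1 * (a - t) ^ 2) * Real.exp (-b * (a - t) ^ 2)) := by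
          have hnn2 : (0:ℝ) ≤ L + B * a ^ 2 := by
            have := mul_nonneg hBnn (sq_nonneg a); linarith
          exact mul_le_mul hfac hwp' (abs_nonneg _) hnn2
      _ ≤ (A + 2 * B * (a - t) ^ 2) * ((k0 + k1 * (a - t) ^ 2) * Real.exp (-b * (a - t) ^ 2)) :=
          mul_le_mul_of_nonneg_right hfac2 hnn1
      _ = bound a := by rw [hbound]; ring
  have h_diff : ∀ᵐ a, ∀ x ∈ Metric.ball x₀ ε, HasDerivAt (fun y => F y a) (F' x a) x := by
    refine Filter.Eventually.of_forall fun a => fun x hx => ?_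
    have hmd : HasDerivAt (fun y => m y a) (w * p' x a) x := by
      simpa [hm] using (((hderiv a x hx).const_mul w).add_const ((1 - w) * φ a))
    have hmne : m x a ≠ 0 := (hmpos x hx a).ne'
    have hlogd : HasDerivAt (fun y => Real.log (m y a)) (w * p' x a / m x a) x :=
      hmd.log hmne
    have hd : HasDerivAt (fun y => (r a - α * Real.log (m y a)) * m y a)
        ((0 - α * (w * p' x a / m x a)) * m x a
          + (r a - α * Real.log (m x a)) * (w * p' x a)) x :=
      (((hasDerivAt_const x (r a)).sub (hlogd.const_mul α)).mul hmd)
    have heq : (0 - α * (w * p' x a / m x a)) * m x a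
        + (r a - α * Real.log (m x a)) * (w * p' x a)
        = (r a - α - α * Real.log (m x a)) * (w * p' x a) := by
      field_simp
      ring
    rw [heq] at hd
    exact hd
  have key := hasDerivAt_integral_of_dominated_loc_of_deriv_le (Metric.ball_mem_nhds x₀ hε)
    (Filter.Eventually.of_forall fun x => (hFmeas x).aestronglyMeasurable)
    hFint hF'meas h_bound hboundint h_diff
  have hfinal : (∫ a, F' x₀ a) = w * ∫ a, (r a - α - α * Real.log (gpdf μ0 σ0 a)) * p' x₀ a := by
    rw [← integral_const_mul]
    congr 1
    funext a
    rw [hF']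
    simp only [hm0 a, hφ]
    ring
  rw [hfinal] at key
  exact key.2

lemma gpdf_deriv_mu (σ : ℝ) (hσ : 0 < σ) (a x : ℝ) :
    HasDerivAt (fun y => gpdf y σ a) (gpdf x σ a * ((a - x) / σ ^ 2)) x := by
  have h1 : HasDerivAt (fun y : ℝ => a - y) (-1) x := by
    simpa using (hasDerivAt_id x).const_sub a
  have h2 : HasDerivAt (fun y : ℝ => -((a - y) ^ 2) / (2 * σ ^ 2)) ((a - x) / σ ^ 2) x := by
    have h2' := ((h1.pow 2).neg).div_const (2 * σ ^ 2)
    refine h2'.congr_deriv ?_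
    field_simp
    ring
  have h3 := (h2.exp).const_mul (Real.sqrt (2 * Real.pi * σ ^ 2))⁻¹
  refine h3.congr_deriv ?_
  unfold gpdf
  ring

lemma abs_le_one_add_sq (u : ℝ) : |u| ≤ 1 + u ^ 2 := by
  nlinarith [sq_nonneg (|u| - 1), sq_abs u, abs_nonneg u]

lemma hasDerivAt_mu
    (r : ℝ → ℝ) (hmeas : Measurable r) (C : ℝ) (hbd : ∀ a, |r a| ≤ C)
    (α : ℝ) (hα : 0 ≤ α) (μ σ : ℝ) (hσ : 0 < σ)
    (w : ℝ) (hw0 : 0 < w) (hw1 : w ≤ 1) :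
    HasDerivAt (fun x => ∫ a, (r a - α * Real.log (w * gpdf x σ a + (1 - w) * gpdf μ σ a))
        * (w * gpdf x σ a + (1 - w) * gpdf μ σ a))
      (w * ∫ a, (r a - α - α * Real.log (gpdf μ σ a))
        * (gpdf μ σ a * ((a - μ) / σ ^ 2))) μ := by
  have hSpos : 0 < Real.sqrt (2 * Real.pi * σ ^ 2) := sqrt2pi_pos σ hσ
  set S := Real.sqrt (2 * Real.pi * σ ^ 2) with hS
  have hσ2 : (0:ℝ) < σ ^ 2 := by positivity
  refine hasDerivAt_Jgen r hmeas C hbd α hα μ σ hσ w hw0 hw1 μ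
    (fun x a => gpdf x σ a) (fun x a => gpdf x σ a * ((a - x) / σ ^ 2))
    1 one_pos (fun a => rfl) (fun x => measurable_gpdf x σ)
    (((measurable_gpdf μ σ).mul ((measurable_id.sub_const μ).div_const (σ ^ 2))))
    (fun x _ a => gpdf_pos hσ a)
    S⁻¹ (fun x _ a => gpdf_le hσ a)
    ((2 * μ ^ 2 + 1) / σ ^ 2 + Real.log S) (2 / σ ^ 2) (by positivity)
    ?_ (1 / (4 * σ ^ 2)) (2 * (S⁻¹ * Real.exp (1 / (2 * σ ^ 2)) / σ ^ 2))
    (S⁻¹ * Real.exp (1 / (2 * σ ^ 2)) / σ ^ 2) (by positivity) (by positivity) (by positivity)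
    μ ?_ (fun a x _ => gpdf_deriv_mu σ hσ a x)
  · -- lower bound
    intro x hx a
    rw [Metric.mem_ball, Real.dist_eq] at hx
    have hxsq : (x - μ) ^ 2 ≤ 1 := by
      nlinarith [le_abs_self (x - μ), neg_abs_le (x - μ)]
    have hSeq : S⁻¹ = Real.exp (-Real.log S) := by
      rw [Real.exp_neg, Real.exp_log hSpos]
    show Real.exp (-((2 * μ ^ 2 + 1) / σ ^ 2 + Real.log S + 2 / σ ^ 2 * a ^ 2))
      ≤ gpdf x σ a
    unfold gpdf
    rw [← hS, hSeq, ← Real.exp_add]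
    apply Real.exp_le_exp.mpr
    have key : (a - x) ^ 2 ≤ 4 * a ^ 2 + 4 * μ ^ 2 + 2 := by
      nlinarith [sq_nonneg ((a - μ) + (x - μ)), sq_nonneg (a + μ)]
    have h2 : (a - x) ^ 2 / (2 * σ ^ 2) ≤ (2 * a ^ 2 + 2 * μ ^ 2 + 1) / σ ^ 2 := by
      rw [div_le_div_iff₀ (by positivity) hσ2]
      nlinarith
    have hexp : -((a - x) ^ 2) / (2 * σ ^ 2) = -((a - x) ^ 2 / (2 * σ ^ 2)) := by ring
    rw [hexp]
    have hgoal : (2 * μ ^ 2 + 1) / σ ^ 2 + 2 / σ ^ 2 * a ^ 2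
        = (2 * a ^ 2 + 2 * μ ^ 2 + 1) / σ ^ 2 := by ring
    linarith
  · -- derivative bound
    intro x hx a
    rw [Metric.mem_ball, Real.dist_eq] at hx
    have hxsq : (x - μ) ^ 2 ≤ 1 := by
      nlinarith [le_abs_self (x - μ), neg_abs_le (x - μ)]
    have hgpos := gpdf_pos (μ := x) hσ a
    have habs : |gpdf x σ a * ((a - x) / σ ^ 2)| = gpdf x σ a * (|a - x| / σ ^ 2) := by
      rw [abs_mul, abs_of_pos hgpos, abs_div, abs_of_pos hσ2]
    have hgexp : gpdf x σ a ≤ (S⁻¹ * Real.exp (1 / (2 * σ ^ 2)))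
        * Real.exp (-(1 / (4 * σ ^ 2)) * (a - μ) ^ 2) := by
      unfold gpdf
      rw [← hS, mul_assoc, ← Real.exp_add]
      apply mul_le_mul_of_nonneg_left _ (by positivity)
      apply Real.exp_le_exp.mpr
      have key : (a - μ) ^ 2 ≤ 2 + 2 * (a - x) ^ 2 := by
        nlinarith [sq_nonneg ((a - μ) + 2 * (μ - x))]
      have e1 : -((a - x) ^ 2) / (2 * σ ^ 2) = (-2 * (a - x) ^ 2) * (4 * σ ^ 2)⁻¹ := by
        field_simp; ring
      have e2 : 1 / (2 * σ ^ 2) + -(1 / (4 * σ ^ 2)) * (a - μ) ^ 2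
          = (2 - (a - μ) ^ 2) * (4 * σ ^ 2)⁻¹ := by
        field_simp; ring
      rw [e1, e2]
      apply mul_le_mul_of_nonneg_right (by linarith) (by positivity)
    have hdb : |a - x| / σ ^ 2 ≤ (2 + (a - μ) ^ 2) / σ ^ 2 := by
      have h1 : |a - x| ≤ |a - μ| + |x - μ| := by
        have := abs_sub (a - μ) (x - μ)
        simpa using this
      have h2 : |a - μ| ≤ 1 + (a - μ) ^ 2 := abs_le_one_add_sq _
      have h3 : |x - μ| ≤ 1 := by
        nlinarith [le_abs_self (x - μ), neg_abs_le (x - μ), abs_nonneg (x - μ)]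
      gcongr
      linarith
    rw [habs]
    calc gpdf x σ a * (|a - x| / σ ^ 2)
        ≤ ((S⁻¹ * Real.exp (1 / (2 * σ ^ 2))) * Real.exp (-(1 / (4 * σ ^ 2)) * (a - μ) ^ 2))
          * ((2 + (a - μ) ^ 2) / σ ^ 2) :=
          mul_le_mul hgexp hdb (by positivity) (by positivity)
      _ = (2 * (S⁻¹ * Real.exp (1 / (2 * σ ^ 2)) / σ ^ 2)
            + S⁻¹ * Real.exp (1 / (2 * σ ^ 2)) / σ ^ 2 * (a - μ) ^ 2)
          * Real.exp (-(1 / (4 * σ ^ 2)) * (a - μ) ^ 2) := by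
          field_simp

lemma gpdf_deriv_sigma (μ a s : ℝ) (hs : 0 < s) :
    HasDerivAt (fun y => gpdf μ y a) (gpdf μ s a * ((a - μ) ^ 2 / s ^ 3 - 1 / s)) s := by
  have h2π : (0:ℝ) < Real.sqrt (2 * Real.pi) := Real.sqrt_pos.mpr (by positivity)
  have hne : Real.sqrt (2 * Real.pi) * s ≠ 0 := by positivity
  have h1 : HasDerivAt (fun y : ℝ => Real.sqrt (2 * Real.pi) * y)
      (Real.sqrt (2 * Real.pi)) s := by
    simpa using (hasDerivAt_id s).const_mul (Real.sqrt (2 * Real.pi))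
  have hinv1 := h1.inv hne
  have hy2 : HasDerivAt (fun y : ℝ => y ^ 2) (2 * s) s := by
    simpa using hasDerivAt_pow 2 s
  have hs2ne : s ^ 2 ≠ 0 := by positivity
  have hinv2 := hy2.inv hs2ne
  have hc := hinv2.const_mul (-((a - μ) ^ 2) / 2)
  have hexp := hc.exp
  have hprod := hinv1.mul hexp
  have heq : (fun y => gpdf μ y a) =ᶠ[nhds s]
      (fun y => (Real.sqrt (2 * Real.pi) * y)⁻¹
        * Real.exp (-((a - μ) ^ 2) / 2 * (y ^ 2)⁻¹)) := by
    filter_upwards [eventually_gt_nhds hs] with y hy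
    unfold gpdf
    rw [Real.sqrt_mul (by positivity : (0:ℝ) ≤ 2 * Real.pi) (y ^ 2), Real.sqrt_sq hy.le]
    congr 1
    ring
  have final := hprod.congr_of_eventuallyEq heq
  refine final.congr_deriv ?_
  simp only [Pi.inv_apply]
  have hg : gpdf μ s a = (Real.sqrt (2 * Real.pi) * s)⁻¹
      * Real.exp (-((a - μ) ^ 2) / 2 * (s ^ 2)⁻¹) := by
    unfold gpdf
    rw [Real.sqrt_mul (by positivity : (0:ℝ) ≤ 2 * Real.pi) (s ^ 2), Real.sqrt_sq hs.le]
    congr 1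
    ring
  rw [hg]
  have hexpne : Real.exp (-((a - μ) ^ 2) / 2 * (s ^ 2)⁻¹) ≠ 0 := Real.exp_ne_zero _
  field_simp
  ring

set_option maxHeartbeats 1000000 in
lemma hasDerivAt_sigma
    (r : ℝ → ℝ) (hmeas : Measurable r) (C : ℝ) (hbd : ∀ a, |r a| ≤ C)
    (α : ℝ) (hα : 0 ≤ α) (μ σ : ℝ) (hσ : 0 < σ)
    (w : ℝ) (hw0 : 0 < w) (hw1 : w ≤ 1) :
    HasDerivAt (fun x => ∫ a, (r a - α * Real.log (w * gpdf μ x a + (1 - w) * gpdf μ σ a))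
        * (w * gpdf μ x a + (1 - w) * gpdf μ σ a))
      (w * ∫ a, (r a - α - α * Real.log (gpdf μ σ a))
        * (gpdf μ σ a * ((a - μ) ^ 2 / σ ^ 3 - 1 / σ))) σ := by
  have hS2pos : 0 < Real.sqrt (2 * Real.pi * (σ / 2) ^ 2) := sqrt2pi_pos _ (by positivity)
  have hS3pos : 0 < Real.sqrt (2 * Real.pi * (3 * σ / 2) ^ 2) := sqrt2pi_pos _ (by positivity)
  set Mp := (Real.sqrt (2 * Real.pi * (σ / 2) ^ 2))⁻¹ with hMp
  set S3 := Real.sqrt (2 * Real.pi * (3 * σ / 2) ^ 2) with hS3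
  have hball : ∀ s : ℝ, s ∈ Metric.ball σ (σ / 2) → σ / 2 < s ∧ s < 3 * σ / 2 := by
    intro s hs
    rw [Metric.mem_ball, Real.dist_eq] at hs
    constructor <;> nlinarith [le_abs_self (s - σ), neg_abs_le (s - σ)]
  have hspos : ∀ s : ℝ, s ∈ Metric.ball σ (σ / 2) → 0 < s := by
    intro s hs
    have := (hball s hs).1
    linarith
  refine hasDerivAt_Jgen r hmeas C hbd α hα μ σ hσ w hw0 hw1 σ
    (fun s a => gpdf μ s a) (fun s a => gpdf μ s a * ((a - μ) ^ 2 / s ^ 3 - 1 / s))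
    (σ / 2) (by positivity) (fun a => rfl) (fun s => measurable_gpdf μ s)
    ((measurable_gpdf μ σ).mul (((measurable_id.sub_const μ).pow_const 2).div_const (σ ^ 3)
      |>.sub measurable_const))
    (fun s hs a => gpdf_pos (hspos s hs) a)
    Mp ?_
    (Real.log S3 + 4 * μ ^ 2 / σ ^ 2) (4 / σ ^ 2) (by positivity)
    ?_ (2 / (9 * σ ^ 2)) (Mp * (2 / σ)) (Mp * (8 / σ ^ 3))
    (by positivity) (by positivity) (by positivity)
    μ ?_ (fun a s hs => gpdf_deriv_sigma μ a s (hspos s hs))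
  · -- upper bound
    intro s hs a
    have h1 := gpdf_le (hspos s hs) (μ := μ) (a := a)
    have h2 : Real.sqrt (2 * Real.pi * (σ / 2) ^ 2) ≤ Real.sqrt (2 * Real.pi * s ^ 2) := by
      apply Real.sqrt_le_sqrt
      have h0 := (hball s hs).1
      have hsq : (σ / 2) ^ 2 ≤ s ^ 2 := by nlinarith
      nlinarith [Real.pi_pos, hsq]
    calc gpdf μ s a ≤ (Real.sqrt (2 * Real.pi * s ^ 2))⁻¹ := h1
      _ ≤ Mp := by rw [hMp]; exact inv_anti₀ hS2pos h2
  · -- lower bound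
    intro s hs a
    obtain ⟨hs1, hs2⟩ := hball s hs
    have hsp : 0 < s := by linarith
    have e : Real.exp (-(Real.log S3 + 4 * μ ^ 2 / σ ^ 2 + 4 / σ ^ 2 * a ^ 2))
        = Real.exp (-Real.log S3) * Real.exp (-(4 * μ ^ 2 / σ ^ 2 + 4 / σ ^ 2 * a ^ 2)) := by
      rw [← Real.exp_add]; ring_nf
    rw [e]
    unfold gpdf
    apply mul_le_mul
    · rw [Real.exp_neg, Real.exp_log hS3pos]
      apply inv_anti₀ (sqrt2pi_pos s hsp)
      apply Real.sqrt_le_sqrt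
      have hsq : s ^ 2 ≤ (3 * σ / 2) ^ 2 := by nlinarith
      nlinarith [Real.pi_pos, hsq]
    · apply Real.exp_le_exp.mpr
      have h1 : (a - μ) ^ 2 / (2 * s ^ 2) ≤ (a - μ) ^ 2 / (σ ^ 2 / 2) := by
        apply div_le_div_of_nonneg_left (sq_nonneg _) (by positivity)
        nlinarith
      have h2 : (a - μ) ^ 2 / (σ ^ 2 / 2) ≤ 4 * μ ^ 2 / σ ^ 2 + 4 / σ ^ 2 * a ^ 2 := by
        rw [div_le_iff₀ (by positivity : (0:ℝ) < σ ^ 2 / 2)]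
        have hσ2 : (0:ℝ) < σ ^ 2 := by positivity
        field_simp
        nlinarith [sq_nonneg (a + μ)]
      have h3 : -((a - μ) ^ 2) / (2 * s ^ 2) = -((a - μ) ^ 2 / (2 * s ^ 2)) := by ring
      rw [h3]
      linarith
    · positivity
    · positivity
  · -- derivative bound
    intro s hs a
    obtain ⟨hs1, hs2⟩ := hball s hs
    have hsp : 0 < s := by linarith
    have hgpos := gpdf_pos (μ := μ) hsp a
    rw [abs_mul, abs_of_pos hgpos]
    have hg1 : gpdf μ s a ≤ Mp * Real.exp (-(2 / (9 * σ ^ 2)) * (a - μ) ^ 2) := by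
      unfold gpdf
      apply mul_le_mul
      · rw [hMp]
        apply inv_anti₀ hS2pos
        apply Real.sqrt_le_sqrt
        have hsq : (σ / 2) ^ 2 ≤ s ^ 2 := by nlinarith
        nlinarith [Real.pi_pos, hsq]
      · apply Real.exp_le_exp.mpr
        have hcoef : 2 / (9 * σ ^ 2) ≤ 1 / (2 * s ^ 2) := by
          rw [div_le_div_iff₀ (by positivity) (by positivity)]
          nlinarith
        have h4 : 2 / (9 * σ ^ 2) * (a - μ) ^ 2 ≤ (a - μ) ^ 2 / (2 * s ^ 2) := by
          calc 2 / (9 * σ ^ 2) * (a - μ) ^ 2 ≤ 1 / (2 * s ^ 2) * (a - μ) ^ 2 :=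
                mul_le_mul_of_nonneg_right hcoef (sq_nonneg _)
            _ = (a - μ) ^ 2 / (2 * s ^ 2) := by ring
        have h5 : -((a - μ) ^ 2) / (2 * s ^ 2) = -((a - μ) ^ 2 / (2 * s ^ 2)) := by ring
        rw [h5]
        linarith
      · positivity
      · positivity
    have habs2 : |(a - μ) ^ 2 / s ^ 3 - 1 / s| ≤ (a - μ) ^ 2 * (8 / σ ^ 3) + 2 / σ := by
      have hX : (a - μ) ^ 2 / s ^ 3 ≤ (a - μ) ^ 2 * (8 / σ ^ 3) := by
        have hp3 : (σ / 2) ^ 3 ≤ s ^ 3 := pow_le_pow_left₀ (by positivity) hs1.le 3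
        calc (a - μ) ^ 2 / s ^ 3 ≤ (a - μ) ^ 2 / ((σ / 2) ^ 3) :=
              div_le_div_of_nonneg_left (sq_nonneg _) (by positivity) hp3
          _ = (a - μ) ^ 2 * (8 / σ ^ 3) := by
              rw [show ((σ / 2):ℝ) ^ 3 = σ ^ 3 / 8 by ring, div_div_eq_mul_div, mul_div_assoc]
      have hY : 1 / s ≤ 2 / σ := by
        rw [div_le_div_iff₀ hsp hσ]
        nlinarith
      calc |(a - μ) ^ 2 / s ^ 3 - 1 / s| ≤ |(a - μ) ^ 2 / s ^ 3| + |1 / s| := abs_sub _ _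
        _ = (a - μ) ^ 2 / s ^ 3 + 1 / s := by
            rw [abs_of_nonneg (by positivity), abs_of_nonneg (by positivity)]
        _ ≤ (a - μ) ^ 2 * (8 / σ ^ 3) + 2 / σ := by linarith
    calc gpdf μ s a * |(a - μ) ^ 2 / s ^ 3 - 1 / s|
        ≤ (Mp * Real.exp (-(2 / (9 * σ ^ 2)) * (a - μ) ^ 2))
            * ((a - μ) ^ 2 * (8 / σ ^ 3) + 2 / σ) :=
          mul_le_mul hg1 habs2 (abs_nonneg _) (by positivity)
      _ = (Mp * (2 / σ) + Mp * (8 / σ ^ 3) * (a - μ) ^ 2)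
            * Real.exp (-(2 / (9 * σ ^ 2)) * (a - μ) ^ 2) := by ring

lemma sum_exp_pos {N : ℕ} (hN : 1 ≤ N) (η : Fin N → ℝ) : 0 < ∑ j, Real.exp (η j) := by
  have : Nonempty (Fin N) := Fin.pos_iff_nonempty.mp hN
  exact Finset.sum_pos (fun j _ => Real.exp_pos _) Finset.univ_nonempty

lemma softmax_sum {N : ℕ} (hN : 1 ≤ N) (η : Fin N → ℝ) : ∑ j, softmaxW η j = 1 := by
  unfold softmaxW
  rw [← Finset.sum_div]
  exact div_self (sum_exp_pos hN η).ne'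

lemma mix_const {N : ℕ} (hN : 1 ≤ N) (μ σ : ℝ) (η : Fin N → ℝ) (a : ℝ) :
    mixDensity (fun _ => μ) (fun _ => σ) η a = gpdf μ σ a := by
  unfold mixDensity
  rw [← Finset.sum_mul, softmax_sum hN, one_mul]

lemma softmax_const {N : ℕ} (k : Fin N) : softmaxW (fun _ => (0:ℝ)) k = 1 / N := by
  unfold softmaxW
  simp

lemma mix_update_mu {N : ℕ} (hN : 1 ≤ N) (k : Fin N) (μ σ x a : ℝ) :
    mixDensity (Function.update (fun _ : Fin N => μ) k x) (fun _ => σ) (fun _ => 0) a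
      = (1 / N) * gpdf x σ a + (1 - 1 / N) * gpdf μ σ a := by
  unfold mixDensity
  have hfn : ∀ j, softmaxW (fun _ : Fin N => (0:ℝ)) j
      * gpdf (Function.update (fun _ : Fin N => μ) k x j) ((fun _ : Fin N => σ) j) a
      = Function.update (fun _ : Fin N => (1 / (N:ℝ)) * gpdf μ σ a) k
          ((1 / (N:ℝ)) * gpdf x σ a) j := by
    intro j
    rcases eq_or_ne j k with h | h
    · subst h; simp [softmax_const, Function.update_self]
    · simp [softmax_const, Function.update_of_ne h]
  rw [Finset.sum_congr rfl fun j _ => hfn j,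
    Finset.sum_update_of_mem (Finset.mem_univ k), Finset.sum_const,
    Finset.card_sdiff_of_subset (Finset.singleton_subset_iff.mpr (Finset.mem_univ k))]
  simp only [Finset.card_univ, Fintype.card_fin, Finset.card_singleton, nsmul_eq_mul]
  have hcast : ((N - 1 : ℕ) : ℝ) = (N:ℝ) - 1 := by
    rw [Nat.cast_sub hN]; norm_num
  rw [hcast]
  have hNne' : (N:ℝ) ≠ 0 := by
    have : (0:ℝ) < N := by exact_mod_cast hN
    exact this.ne'
  field_simp

lemma mix_update_sigma {N : ℕ} (hN : 1 ≤ N) (k : Fin N) (μ σ x a : ℝ) :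
    mixDensity (fun _ : Fin N => μ) (Function.update (fun _ : Fin N => σ) k x) (fun _ => 0) a
      = (1 / N) * gpdf μ x a + (1 - 1 / N) * gpdf μ σ a := by
  unfold mixDensity
  have hfn : ∀ j, softmaxW (fun _ : Fin N => (0:ℝ)) j
      * gpdf ((fun _ : Fin N => μ) j) (Function.update (fun _ : Fin N => σ) k x j) a
      = Function.update (fun _ : Fin N => (1 / (N:ℝ)) * gpdf μ σ a) k
          ((1 / (N:ℝ)) * gpdf μ x a) j := by
    intro j
    rcases eq_or_ne j k with h | h
    · subst h; simp [softmax_const, Function.update_self]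
    · simp [softmax_const, Function.update_of_ne h]
  rw [Finset.sum_congr rfl fun j _ => hfn j,
    Finset.sum_update_of_mem (Finset.mem_univ k), Finset.sum_const,
    Finset.card_sdiff_of_subset (Finset.singleton_subset_iff.mpr (Finset.mem_univ k))]
  simp only [Finset.card_univ, Fintype.card_fin, Finset.card_singleton, nsmul_eq_mul]
  have hcast : ((N - 1 : ℕ) : ℝ) = (N:ℝ) - 1 := by
    rw [Nat.cast_sub hN]; norm_num
  rw [hcast]
  have hNne' : (N:ℝ) ≠ 0 := by
    have : (0:ℝ) < N := by exact_mod_cast hN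
    exact this.ne'
  field_simp

lemma key_lemma (r : ℝ → ℝ) (hmeas : Measurable r) (C : ℝ) (hbd : ∀ a, |r a| ≤ C)
    (α : ℝ) (hα : 0 ≤ α) (N : ℕ) (hN : 1 ≤ N)
    (μ σ : ℝ) (h : IsStatB r α μ σ) :
    IsStatM r α (fun _ : Fin N => μ) (fun _ => σ) (fun _ => 0) ∧
      Jm r α (fun _ : Fin N => μ) (fun _ => σ) (fun _ => 0) = Jb r α μ σ := by
  obtain ⟨hσ, ⟨hdbμ, hdμ0⟩, hdbσ, hdσ0⟩ := h
  have hNpos : (0:ℝ) < N := by exact_mod_cast hN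
  set w : ℝ := 1 / N with hw
  have hw0 : 0 < w := by positivity
  have hw1 : w ≤ 1 := by
    rw [hw, div_le_one hNpos]
    exact_mod_cast hN
  -- value equality (mixture with any η equal to the base gaussian)
  have hJmconst : ∀ η : Fin N → ℝ,
      Jm r α (fun _ : Fin N => μ) (fun _ => σ) η = Jb r α μ σ := by
    intro η
    unfold Jm Jb
    congr 1
    funext a
    rw [mix_const hN]
  -- μ-direction
  have hJb_mu : (fun x => Jb r α x σ)
      = fun x => ∫ a, (r a - α * Real.log (1 * gpdf x σ a + (1 - 1) * gpdf μ σ a))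
          * (1 * gpdf x σ a + (1 - 1) * gpdf μ σ a) := by
    funext x
    unfold Jb
    simp only [one_mul, sub_self, zero_mul, add_zero]
  have h1μ := hasDerivAt_mu r hmeas C hbd α hα μ σ hσ 1 one_pos le_rfl
  rw [← hJb_mu] at h1μ
  have hDμ0 : (∫ a, (r a - α - α * Real.log (gpdf μ σ a))
      * (gpdf μ σ a * ((a - μ) / σ ^ 2))) = 0 := by
    have := h1μ.deriv
    rw [hdμ0] at this
    linarith [this]
  have hwμ := hasDerivAt_mu r hmeas C hbd α hα μ σ hσ w hw0 hw1
  rw [hDμ0, mul_zero] at hwμ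
  have hfunμ : ∀ k : Fin N, (fun x => Jm r α (Function.update (fun _ : Fin N => μ) k x)
      (fun _ => σ) (fun _ => 0))
      = fun x => ∫ a, (r a - α * Real.log (w * gpdf x σ a + (1 - w) * gpdf μ σ a))
          * (w * gpdf x σ a + (1 - w) * gpdf μ σ a) := by
    intro k
    funext x
    unfold Jm
    congr 1
    funext a
    rw [mix_update_mu hN k, hw]
  -- σ-direction
  have hJb_sigma : (fun x => Jb r α μ x)
      = fun x => ∫ a, (r a - α * Real.log (1 * gpdf μ x a + (1 - 1) * gpdf μ σ a))
          * (1 * gpdf μ x a + (1 - 1) * gpdf μ σ a) := by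
    funext x
    unfold Jb
    simp only [one_mul, sub_self, zero_mul, add_zero]
  have h1σ := hasDerivAt_sigma r hmeas C hbd α hα μ σ hσ 1 one_pos le_rfl
  rw [← hJb_sigma] at h1σ
  have hDσ0 : (∫ a, (r a - α - α * Real.log (gpdf μ σ a))
      * (gpdf μ σ a * ((a - μ) ^ 2 / σ ^ 3 - 1 / σ))) = 0 := by
    have := h1σ.deriv
    rw [hdσ0] at this
    linarith [this]
  have hwσ := hasDerivAt_sigma r hmeas C hbd α hα μ σ hσ w hw0 hw1
  rw [hDσ0, mul_zero] at hwσ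
  have hfunσ : ∀ k : Fin N, (fun x => Jm r α (fun _ : Fin N => μ)
      (Function.update (fun _ : Fin N => σ) k x) (fun _ => 0))
      = fun x => ∫ a, (r a - α * Real.log (w * gpdf μ x a + (1 - w) * gpdf μ σ a))
          * (w * gpdf μ x a + (1 - w) * gpdf μ σ a) := by
    intro k
    funext x
    unfold Jm
    congr 1
    funext a
    rw [mix_update_sigma hN k, hw]
  -- η-direction: constant function
  have hfunη : ∀ k : Fin N, (fun x => Jm r α (fun _ : Fin N => μ) (fun _ => σ)
      (Function.update (fun _ : Fin N => (0:ℝ)) k x))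
      = fun _ => Jb r α μ σ := by
    intro k
    funext x
    exact hJmconst _
  refine ⟨⟨fun _ => hσ, fun k => ⟨?_, ?_, ?_⟩⟩, hJmconst _⟩
  · rw [hfunμ k]
    exact ⟨hwμ.differentiableAt, hwμ.deriv⟩
  · rw [hfunσ k]
    exact ⟨hwσ.differentiableAt, hwσ.deriv⟩
  · rw [hfunη k]
    exact ⟨differentiableAt_const _, deriv_const _ _⟩


/-- if the Gaussian objective has a stationary point, so does the
`N`-component mixture objective, and the best stationary value of the mixture
objective is at least that of the Gaussian objective (suprema in `EReal`). -/
theorem stmt4 (r : ℝ → ℝ) (hmeas : Measurable r) (C : ℝ) (hbd : ∀ a, |r a| ≤ C)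
    (α : ℝ) (hα : 0 ≤ α) (N : ℕ) (hN : 1 ≤ N)
    (hex : ∃ μ σ : ℝ, IsStatB r α μ σ) :
    (∃ μs σs η : Fin N → ℝ, IsStatM r α μs σs η) ∧
    sSup {x : EReal | ∃ μ σ : ℝ, IsStatB r α μ σ ∧ x = (Jb r α μ σ : EReal)} ≤
      sSup {x : EReal |
        ∃ μs σs η : Fin N → ℝ, IsStatM r α μs σs η ∧ x = (Jm r α μs σs η : EReal)} := by
  obtain ⟨μ0, σ0, h0⟩ := hex
  constructor
  · exact ⟨_, _, _, (key_lemma r hmeas C hbd α hα N hN μ0 σ0 h0).1⟩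
  · apply sSup_le_sSup
    rintro x ⟨μ, σ, hst, rfl⟩
    obtain ⟨hm, he⟩ := key_lemma r hmeas C hbd α hα N hN μ σ hst
    exact ⟨_, _, _, hm, by rw [he]⟩
end
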